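/- Every right noetherian right perfect ring is right artinian. -/

import Mathlib

universe u

/-- A ring is *right perfect* if it satisfies the descending chain condition
on principal left ideals. -/
def IsRightPerfectRing (R : Type u) [Ring R] : Prop :=
  ∀ f : ℕ → R, (∀ n, Ideal.span {f (n + 1)} ≤ Ideal.span {f n}) →
    ∃ N, ∀ n, N ≤ n → Ideal.span {f n} = Ideal.span {f N}

/-! ### Auxiliary general theory (Bass's theorem machinery) -/

/-- Elementwise form of the descending chain condition on principal right ideals. -/
def PerfElem (A : Type*) [Ring A] : Prop :=
  ∀ g : ℕ → A, (∀ n, ∃ s, g (n + 1) = g n * s) →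
    ∃ N, ∀ n, N ≤ n → ∃ s, g N = g n * s

section JacAux

variable {A : Type*} [Ring A]

/-- Jacobson's lemma. -/
lemma aux_jacobson_swap {a b : A} (h : IsUnit (a * b + 1)) : IsUnit (b * a + 1) := by
  obtain ⟨u, hu⟩ := h
  have h1 : (a * b + 1) * ↑u⁻¹ = 1 := by rw [← hu]; exact u.mul_inv
  have h2 : (↑u⁻¹ : A) * (a * b + 1) = 1 := by rw [← hu]; exact u.inv_mul
  set v : A := ↑u⁻¹ with hv
  have key1 : a * b * v = 1 - v := by
    have h3 : a * b * v + v = 1 := by rw [← h1]; noncomm_ring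
    exact eq_sub_of_add_eq h3
  have key2 : v * (a * b) = 1 - v := by
    have h3 : v * (a * b) + v = 1 := by rw [← h2]; noncomm_ring
    exact eq_sub_of_add_eq h3
  refine ⟨⟨b * a + 1, 1 - b * v * a, ?_, ?_⟩, rfl⟩
  · have expand : (b * a + 1) * (1 - b * v * a)
        = b * a + 1 - b * (a * b * v) * a - b * v * a := by noncomm_ring
    rw [expand, key1]; noncomm_ring
  · have expand : (1 - b * v * a) * (b * a + 1)
        = b * a + 1 - b * (v * (a * b)) * a - b * v * a := by noncomm_ring
    rw [expand, key2]; noncomm_ring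

lemma aux_mem_jac_iff {x : A} :
    x ∈ Ideal.jacobson (⊥ : Ideal A) ↔ ∀ y, IsUnit (y * x + 1) := by
  rw [Ideal.mem_jacobson_iff]
  constructor
  · intro h y
    obtain ⟨z, hz⟩ := h y
    rw [Ideal.mem_bot] at hz
    have hz' : z * y * x + z = 1 := eq_of_sub_eq_zero hz
    have hz1 : z * (y * x + 1) = 1 := by rw [mul_add, mul_one, ← mul_assoc]; exact hz'
    obtain ⟨w, hw⟩ := h (-(z * y))
    rw [Ideal.mem_bot] at hw
    have hw' : w * (-(z * y)) * x + w = 1 := eq_of_sub_eq_zero hw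
    have hzeq : -(z * y) * x + 1 = z := by
      have e1 : -(z * y) * x + 1 = 1 - z * y * x := by noncomm_ring
      rw [e1, sub_eq_iff_eq_add']
      exact hz'.symm
    have hw1 : w * (-(z * y) * x + 1) = 1 := by
      rw [mul_add, mul_one, ← mul_assoc]; exact hw'
    have hwz : w * z = 1 := by rw [← hzeq]; exact hw1
    have hwe : w = y * x + 1 := by
      calc w = w * (z * (y * x + 1)) := by rw [hz1, mul_one]
        _ = (w * z) * (y * x + 1) := by rw [mul_assoc]
        _ = y * x + 1 := by rw [hwz, one_mul]
    exact ⟨⟨y * x + 1, z, by rw [← hwe]; exact hwz, hz1⟩, rfl⟩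
  · intro h y
    obtain ⟨u, hu⟩ := h y
    refine ⟨↑u⁻¹, ?_⟩
    rw [Ideal.mem_bot, sub_eq_zero]
    have h1 : (↑u⁻¹ : A) * (y * x + 1) = 1 := by rw [← hu]; exact u.inv_mul
    calc (↑u⁻¹ : A) * y * x + ↑u⁻¹ = ↑u⁻¹ * (y * x + 1) := by noncomm_ring
      _ = 1 := h1

lemma aux_mem_jac_iff' {x : A} :
    x ∈ Ideal.jacobson (⊥ : Ideal A) ↔ ∀ y, IsUnit (x * y + 1) := by
  rw [aux_mem_jac_iff]
  exact ⟨fun h y => aux_jacobson_swap (h y), fun h y => aux_jacobson_swap (h y)⟩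

/-- T-nilpotence: any sequence of partial products with factors in the radical vanishes. -/
lemma aux_tnil (hP : PerfElem A) (p : ℕ → A)
    (hp : ∀ n, ∃ j ∈ Ideal.jacobson (⊥ : Ideal A), p (n + 1) = p n * j) :
    ∃ n, p n = 0 := by
  obtain ⟨N, hN⟩ := hP p (fun n => by obtain ⟨j, _, hj⟩ := hp n; exact ⟨j, hj⟩)
  obtain ⟨s, hs⟩ := hN (N + 1) (Nat.le_succ N)
  obtain ⟨j, hjJ, hj⟩ := hp N
  have hjs : IsUnit (j * (-s) + 1) := aux_mem_jac_iff'.1 hjJ (-s)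
  obtain ⟨u, hu⟩ := hjs
  refine ⟨N, ?_⟩
  have key : p N * (j * (-s) + 1) = 0 := by
    have : p N = p N * j * s := by rw [← hj]; exact hs
    calc p N * (j * (-s) + 1) = p N - p N * j * s := by noncomm_ring
      _ = 0 := by rw [← this]; exact sub_self _
  have : p N * ↑u = 0 := by rw [hu]; exact key
  calc p N = p N * ↑u * ↑u⁻¹ := by rw [mul_assoc, u.mul_inv, mul_one]
    _ = 0 := by rw [this, zero_mul]

end JacAux

section Nilpotence

variable {A : Type u} [Ring A]

/-- In a noetherian ring with the chain condition, the Jacobson radical is nilpotent. -/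
lemma aux_nilpotent [IsNoetherianRing A] (hP : PerfElem A) :
    ∃ m, ∀ l : List A, (∀ x ∈ l, x ∈ Ideal.jacobson (⊥ : Ideal A)) →
      l.length = m → l.prod = 0 := by
  classical
  set J := Ideal.jacobson (⊥ : Ideal A) with hJ
  -- the ascending chain of annihilators
  set At : ℕ → Submodule A A := fun t =>
    { carrier := {y | ∀ l : List A, (∀ x ∈ l, x ∈ J) → l.length = t → y * l.prod = 0}
      add_mem' := fun {a b} ha hb l hl hlen => by
        rw [add_mul, ha l hl hlen, hb l hl hlen, add_zero]
      zero_mem' := fun l hl hlen => by rw [zero_mul]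
      smul_mem' := fun r y hy l hl hlen => by
        rw [smul_eq_mul, mul_assoc, hy l hl hlen, mul_zero] } with hAt
  have hmemAt : ∀ t y, y ∈ At t ↔
      ∀ l : List A, (∀ x ∈ l, x ∈ J) → l.length = t → y * l.prod = 0 := fun t y => Iff.rfl
  have hmono : ∀ t, At t ≤ At (t + 1) := by
    intro t y hy
    rw [hmemAt] at hy ⊢
    intro l hl hlen
    rcases l.eq_nil_or_concat with rfl | ⟨L, b, rfl⟩
    · simp at hlen
    · rw [List.concat_eq_append] at hl hlen ⊢
      rw [List.prod_append, List.prod_singleton, ← mul_assoc]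
      have hLlen : L.length = t := by
        rw [List.length_append] at hlen; simpa using Nat.succ_injective hlen
      rw [hy L (fun x hx => hl x (List.mem_append_left _ hx)) hLlen, zero_mul]
  obtain ⟨N, hNstab⟩ := monotone_stabilizes_iff_noetherian.2 inferInstance
    ⟨At, monotone_nat_of_le_succ hmono⟩
  by_cases h1 : (1 : A) ∈ At N
  · refine ⟨N, fun l hl hlen => ?_⟩
    have := (hmemAt N 1).1 h1 l hl hlen
    rwa [one_mul] at this
  · exfalso
    have key : ∀ y : A, y ∉ At N → ∃ c ∈ J, y * c ∉ At N := by
      intro y hy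
      by_contra hcon
      push_neg at hcon
      apply hy
      have : y ∈ At (N + 1) := by
        rw [hmemAt]
        intro l hl hlen
        match l with
        | [] => simp at hlen
        | c :: l' =>
          have hc : c ∈ J := hl c List.mem_cons_self
          have hyc : y * c ∈ At N := hcon c hc
          rw [List.prod_cons, ← mul_assoc]
          exact (hmemAt N (y * c)).1 hyc l'
            (fun x hx => hl x (List.mem_cons_of_mem _ hx))
            (by simpa using Nat.succ_injective hlen)
      have hstab : At N = At (N + 1) := hNstab (N + 1) (Nat.le_succ N)
      rwa [← hstab] at this
    -- build an infinite sequence of products not in At N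
    let step : {y : A // y ∉ At N} → {y : A // y ∉ At N} := fun x =>
      ⟨x.1 * Classical.choose (key x.1 x.2),
        (Classical.choose_spec (key x.1 x.2)).2⟩
    have hstep : ∀ x : {y : A // y ∉ At N},
        ∃ j ∈ J, (step x).1 = x.1 * j := fun x =>
      ⟨Classical.choose (key x.1 x.2), (Classical.choose_spec (key x.1 x.2)).1, rfl⟩
    let seq : ℕ → {y : A // y ∉ At N} := fun n => step^[n] ⟨1, h1⟩
    have hseqsucc : ∀ n, seq (n + 1) = step (seq n) := fun n =>
      Function.iterate_succ_apply' step n _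
    obtain ⟨n, hn⟩ := aux_tnil hP (fun n => (seq n).1) (fun n => by
      have h := hstep (seq n)
      rw [← hseqsucc n] at h
      exact h)
    exact (seq n).2 (hn ▸ (At N).zero_mem)

end Nilpotence

section Semisimple

variable {A : Type u} [Ring A]

/-- Minimality of the principal right ideal generated by `c`. -/
def MinR (c : A) : Prop :=
  ∀ y : A, y ≠ 0 → (∃ r, y = c * r) → ∃ t, c = y * t

variable (hP : PerfElem A)
variable (hJ : ∀ x : A, x ∈ Ideal.jacobson (⊥ : Ideal A) → x = 0)

include hJ in
lemma aux_semiprime : ∀ a : A, a ≠ 0 → ∃ s, a * s * a ≠ 0 := by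
  intro a ha
  by_contra hcon
  push_neg at hcon
  apply ha
  apply hJ
  rw [aux_mem_jac_iff']
  intro y
  refine ⟨⟨a * y + 1, 1 - a * y, ?_, ?_⟩, rfl⟩
  · have : (a * y + 1) * (1 - a * y) = 1 + a * y - a * y - a * y * a * y := by noncomm_ring
    rw [this]
    have h0 : a * y * a * y = 0 := by rw [hcon y, zero_mul]
    rw [h0]; noncomm_ring
  · have : (1 - a * y) * (a * y + 1) = 1 + a * y - a * y - a * y * a * y := by noncomm_ring
    rw [this]
    have h0 : a * y * a * y = 0 := by rw [hcon y, zero_mul]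
    rw [h0]; noncomm_ring

lemma aux_minR_trans {c e : A} (hmin : MinR c) (he : e ≠ 0) (hec : ∃ r, e = c * r) :
    MinR e := by
  intro y hy hyr
  obtain ⟨r₀, hr₀⟩ := hec
  obtain ⟨r, hr⟩ := hyr
  have hyc : ∃ r', y = c * r' := ⟨r₀ * r, by rw [hr, hr₀, mul_assoc]⟩
  obtain ⟨t, ht⟩ := hmin y hy hyc
  exact ⟨t * r₀, by rw [hr₀, ht, mul_assoc]⟩

include hP in
lemma aux_exists_min (a : A) (ha : a ≠ 0) :
    ∃ c : A, c ≠ 0 ∧ (∃ r, c = a * r) ∧ MinR c := by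
  classical
  by_contra hcon
  push_neg at hcon
  simp only [MinR, not_forall] at hcon
  -- for every nonzero c in aA there is a strictly smaller nonzero principal right ideal
  have key : ∀ c : A, c ≠ 0 → (∃ r, c = a * r) →
      ∃ y, y ≠ 0 ∧ (∃ r, y = c * r) ∧ ¬∃ t, c = y * t := by
    intro c hc hcr
    obtain ⟨y, hy⟩ := hcon c hc hcr
    obtain ⟨h1, h2, h3⟩ := hy
    exact ⟨y, h1, h2, fun ht => h3 ht⟩
  let P : A → Prop := fun c => c ≠ 0 ∧ ∃ r, c = a * r
  let step : {c : A // P c} → {c : A // P c} := fun x =>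
    let s := key x.1 x.2.1 x.2.2
    ⟨Classical.choose s, (Classical.choose_spec s).1, by
      obtain ⟨r, hr⟩ := (Classical.choose_spec s).2.1
      obtain ⟨r₀, hr₀⟩ := x.2.2
      exact ⟨r₀ * r, by rw [hr, hr₀, mul_assoc]⟩⟩
  have hstep1 : ∀ x : {c : A // P c}, ∃ r, (step x).1 = x.1 * r := fun x =>
    (Classical.choose_spec (key x.1 x.2.1 x.2.2)).2.1
  have hstep2 : ∀ x : {c : A // P c}, ¬∃ t, x.1 = (step x).1 * t := fun x =>
    (Classical.choose_spec (key x.1 x.2.1 x.2.2)).2.2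
  let seq : ℕ → {c : A // P c} := fun n => step^[n] ⟨a, ha, 1, (mul_one a).symm⟩
  have hseqsucc : ∀ n, seq (n + 1) = step (seq n) := fun n =>
    Function.iterate_succ_apply' step n _
  obtain ⟨N, hN⟩ := hP (fun n => (seq n).1) (fun n => by
    have h := hstep1 (seq n)
    rw [← hseqsucc n] at h
    exact h)
  obtain ⟨t, ht⟩ := hN (N + 1) (Nat.le_succ N)
  have ht' : (seq N).1 = (seq (N + 1)).1 * t := ht
  rw [hseqsucc N] at ht'
  exact hstep2 (seq N) ⟨t, ht'⟩

include hJ in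
lemma aux_exists_idem (c : A) (hc : c ≠ 0) (hmin : MinR c) :
    ∃ e : A, e * e = e ∧ e ≠ 0 ∧ (∃ r, e = c * r) := by
  obtain ⟨s, hs⟩ := aux_semiprime hJ c hc
  have hzc : ∃ r, c * s * c = c * r := ⟨s * c, by rw [mul_assoc]⟩
  obtain ⟨t, htc⟩ := hmin (c * s * c) hs hzc
  -- htc : c = c * s * c * t
  have hae : c * s * (c * t * s) = c * s := by
    have expand : c * s * (c * t * s) = (c * s * c * t) * s := by noncomm_ring
    rw [expand, ← htc]
  have hene : c * t * s ≠ 0 := by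
    intro h
    apply hs
    have hcs : c * s = 0 := by rw [← hae, h, mul_zero]
    rw [show c * s * c = 0 from by rw [hcs, zero_mul]]
  refine ⟨c * t * s, ?_, hene, ⟨t * s, by rw [mul_assoc]⟩⟩
  by_contra hee
  have hw : (c * t * s) * (c * t * s) - (c * t * s) ≠ 0 := fun h =>
    hee (by rwa [sub_eq_zero] at h)
  have hwcT : ∃ r, (c * t * s) * (c * t * s) - (c * t * s) = c * r :=
    ⟨t * s * (c * t * s) - t * s, by noncomm_ring⟩
  obtain ⟨t', ht'⟩ := hmin _ hw hwcT
  have haw : c * s * ((c * t * s) * (c * t * s) - (c * t * s)) = 0 := by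
    have expand : c * s * ((c * t * s) * (c * t * s) - (c * t * s))
        = (c * s * (c * t * s)) * (c * t * s) - c * s * (c * t * s) := by noncomm_ring
    rw [expand, hae, hae, sub_self]
  apply hs
  have h2 : c * s * c = c * s * (((c * t * s) * (c * t * s) - (c * t * s)) * t') :=
    congrArg (fun x => c * s * x) ht'
  rw [h2, ← mul_assoc, haw, zero_mul]

include hJ in
lemma aux_minL (e : A) (he : e * e = e) (hne : e ≠ 0) (hmin : MinR e) :
    ∀ z : A, z ≠ 0 → (∃ u, z = u * e) → ∃ v, e = v * z := by
  intro z hz hzu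
  obtain ⟨u, hu⟩ := hzu
  have hze : z * e = z := by rw [hu, mul_assoc, he]
  obtain ⟨s, hs⟩ := aux_semiprime hJ z hz
  obtain ⟨w, hw⟩ : ∃ w : A, w = e * (s * z) := ⟨_, rfl⟩
  have hzsz : z * s * z = u * w := by rw [hw, hu]; noncomm_ring
  have hwne : w ≠ 0 := by
    intro h
    apply hs
    rw [hzsz, h, mul_zero]
  have hweT : ∃ r, w = e * r := ⟨s * z, hw⟩
  have hwe : w * e = w := by
    calc w * e = e * (s * (z * e)) := by rw [hw]; noncomm_ring
      _ = w := by rw [hze, hw]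
  obtain ⟨t, ht⟩ := hmin w hwne hweT
  obtain ⟨t₂, ht₂⟩ : ∃ x : A, x = e * (t * e) := ⟨_, rfl⟩
  have hwt₂ : w * t₂ = e := by
    calc w * t₂ = (w * e) * t * e := by rw [ht₂]; noncomm_ring
      _ = e * e := by rw [hwe, ← ht]
      _ = e := he
  have ht₂ne : t₂ ≠ 0 := fun h => hne (by rw [← hwt₂, h, mul_zero])
  have ht₂e : t₂ * e = t₂ := by
    calc t₂ * e = e * (t * (e * e)) := by rw [ht₂]; noncomm_ring
      _ = t₂ := by rw [he, ht₂]
  obtain ⟨t₃, ht₃⟩ := hmin t₂ ht₂ne ⟨t * e, ht₂⟩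
  obtain ⟨t₄, ht₄⟩ : ∃ x : A, x = e * (t₃ * e) := ⟨_, rfl⟩
  have ht₂t₄ : t₂ * t₄ = e := by
    calc t₂ * t₄ = (t₂ * e) * t₃ * e := by rw [ht₄]; noncomm_ring
      _ = e * e := by rw [ht₂e, ← ht₃]
      _ = e := he
  have het₄ : e * t₄ = t₄ := by
    calc e * t₄ = (e * e) * (t₃ * e) := by rw [ht₄]; noncomm_ring
      _ = t₄ := by rw [he, ht₄]
  have hwt₄ : w = t₄ := by
    calc w = w * e := hwe.symm
      _ = w * (t₂ * t₄) := by rw [ht₂t₄]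
      _ = (w * t₂) * t₄ := by rw [mul_assoc]
      _ = t₄ := by rw [hwt₂, het₄]
  have ht₂w : t₂ * w = e := by rw [hwt₄, ht₂t₄]
  refine ⟨t₂ * s, ?_⟩
  calc e = t₂ * w := ht₂w.symm
    _ = (t₂ * e) * s * z := by rw [hw]; noncomm_ring
    _ = t₂ * s * z := by rw [ht₂e]

include hP hJ in
/-- A semiprimitive ring with the descending chain condition on
principal right ideals is semisimple. -/
lemma aux_semisimple : IsSemisimpleRing A := by
  classical
  set W : Submodule A A := sSup {m : Submodule A A | IsSimpleModule A m} with hW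
  -- spans of "left minimal" idempotents are simple
  have simple_span : ∀ f : A, f ≠ 0 →
      (∀ z : A, z ≠ 0 → (∃ u, z = u * f) → ∃ v, f = v * z) →
      IsSimpleModule A (Submodule.span A {f} : Submodule A A) := by
    intro f hf0 hminL
    rw [isSimpleModule_iff_isAtom]
    constructor
    · simpa [Submodule.span_singleton_eq_bot] using hf0
    · intro b hb
      by_contra hbne
      obtain ⟨z, hzb, hz0⟩ := (Submodule.ne_bot_iff b).1 hbne
      have hzspan : z ∈ Submodule.span A {f} := hb.le hzb
      obtain ⟨a, haz⟩ := Submodule.mem_span_singleton.1 hzspan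
      obtain ⟨v, hv⟩ := hminL z hz0 ⟨a, by rw [← haz, smul_eq_mul]⟩
      have hfb : f ∈ b := by
        have := b.smul_mem v hzb
        rwa [smul_eq_mul, ← hv] at this
      have : Submodule.span A {f} ≤ b := by
        rw [Submodule.span_le, Set.singleton_subset_iff]; exact hfb
      exact hb.not_ge this
  -- the step: enlarging an idempotent in W
  have step_lem : ∀ e : A, e * e = e → 1 - e ≠ 0 →
      ∃ f : A, f ≠ 0 ∧ f * f = f ∧ e * f = 0 ∧ f * e = 0 ∧ f ∈ W := by
    intro e he hne
    obtain ⟨c, hc0, ⟨r₀, hr₀⟩, hmin⟩ := aux_exists_min hP (1 - e) hne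
    obtain ⟨e', he'idem, he'0, ⟨r₁, hr₁⟩⟩ := aux_exists_idem hJ c hc0 hmin
    have hee' : e * e' = 0 := by
      rw [hr₁, hr₀]
      calc e * ((1 - e) * r₀ * r₁) = (e * (1 - e)) * (r₀ * r₁) := by noncomm_ring
        _ = 0 := by rw [show e * (1 - e) = 0 from by rw [mul_sub, mul_one, he, sub_self],
              zero_mul]
    set f : A := e' - e' * e with hfdef
    have hf0 : f ≠ 0 := by
      intro h
      apply he'0
      have h1 : e' = e' * e := by rwa [hfdef, sub_eq_zero] at h
      calc e' = e' * e' := he'idem.symm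
        _ = (e' * e) * e' := by rw [← h1]
        _ = e' * (e * e') := by rw [mul_assoc]
        _ = 0 := by rw [hee', mul_zero]
    have hff : f * f = f := by
      rw [hfdef]
      have h1 : e' * e' = e' := he'idem
      have h2 : e' * e * e' = 0 := by rw [mul_assoc, hee', mul_zero]
      calc (e' - e' * e) * (e' - e' * e)
          = e' * e' - e' * e * e' - (e' * e' * e - e' * e * e' * e) := by noncomm_ring
        _ = e' - e' * e := by rw [h1, h2]; noncomm_ring
    have hef : e * f = 0 := by
      rw [hfdef, mul_sub, ← mul_assoc, hee', zero_mul, sub_self]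
    have hfe : f * e = 0 := by
      rw [hfdef, sub_mul, mul_assoc, he, sub_self]
    have hfcT : ∃ r, f = c * r := by
      refine ⟨r₁ - r₁ * e, ?_⟩
      rw [hfdef, hr₁, mul_sub, mul_assoc]
    have hfmin : MinR f := aux_minR_trans hmin hf0 hfcT
    have hfW : f ∈ W := by
      have hsimple := simple_span f hf0 (aux_minL hJ f hff hf0 hfmin)
      have hle : Submodule.span A {f} ≤ W := le_sSup hsimple
      exact hle (Submodule.mem_span_singleton_self f)
    exact ⟨f, hf0, hff, hef, hfe, hfW⟩
  -- iterate
  classical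
  let Qp : A → Prop := fun e => e * e = e ∧ e ∈ W
  let good : {e : A // Qp e} → {e : A // Qp e} → Prop := fun x y =>
    (1 - x.1 = 0 ∧ y = x) ∨
      (∃ f : A, f ≠ 0 ∧ f * f = f ∧ x.1 * f = 0 ∧ f * x.1 = 0 ∧ f ∈ W ∧ y.1 = x.1 + f)
  have hstep_ex : ∀ x : {e : A // Qp e}, ∃ y, good x y := by
    intro x
    by_cases h : 1 - x.1 = 0
    · exact ⟨x, Or.inl ⟨h, rfl⟩⟩
    · obtain ⟨f, hf0, hff, hef, hfe, hfW⟩ := step_lem x.1 x.2.1 h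
      refine ⟨⟨x.1 + f, ?_, W.add_mem x.2.2 hfW⟩, Or.inr ⟨f, hf0, hff, hef, hfe, hfW, rfl⟩⟩
      have hx := x.2.1
      calc (x.1 + f) * (x.1 + f)
          = x.1 * x.1 + x.1 * f + f * x.1 + f * f := by noncomm_ring
        _ = x.1 + f := by rw [hx, hef, hfe, hff]; abel
  let step : {e : A // Qp e} → {e : A // Qp e} := fun x => Classical.choose (hstep_ex x)
  have hstep : ∀ x, good x (step x) := fun x => Classical.choose_spec (hstep_ex x)
  let seq : ℕ → {e : A // Qp e} := fun n => step^[n] ⟨0, by simp [Qp], W.zero_mem⟩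
  have hseqsucc : ∀ n, seq (n + 1) = step (seq n) := fun n =>
    Function.iterate_succ_apply' step n _
  have hterm : ∃ n, 1 - (seq n).1 = 0 := by
    by_contra hcon
    push_neg at hcon
    have hstep_all : ∀ n, ∃ f : A, f ≠ 0 ∧ f * f = f ∧ (seq n).1 * f = 0 ∧
        f * (seq n).1 = 0 ∧ f ∈ W ∧ (seq (n + 1)).1 = (seq n).1 + f := by
      intro n
      have hg := hstep (seq n)
      rw [← hseqsucc n] at hg
      rcases hg with ⟨h0, _⟩ | ⟨f, hf0, hff, hef, hfe, hfW, heq⟩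
      · exact absurd h0 (hcon n)
      · exact ⟨f, hf0, hff, hef, hfe, hfW, heq⟩
    choose fs hf0 hff hef hfe hfW hstepeq using hstep_all
    have hchain : ∀ n, (1 : A) - (seq (n + 1)).1 =
        (1 - (seq n).1) * (1 - (seq (n + 1)).1) := by
      intro n
      have h1 : (seq n).1 * (seq (n + 1)).1 = (seq n).1 := by
        rw [hstepeq n, mul_add, (seq n).2.1, hef n, add_zero]
      calc (1 : A) - (seq (n + 1)).1
          = 1 - (seq (n+1)).1 - (seq n).1 + (seq n).1 * (seq (n+1)).1 := by
            rw [h1]; noncomm_ring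
        _ = (1 - (seq n).1) * (1 - (seq (n + 1)).1) := by noncomm_ring
    obtain ⟨N, hN⟩ := hP (fun n => 1 - (seq n).1)
      (fun n => ⟨1 - (seq (n + 1)).1, hchain n⟩)
    obtain ⟨s, hs⟩ := hN (N + 1) (Nat.le_succ N)
    have hs' : (1 : A) - (seq N).1 = (1 - (seq (N + 1)).1) * s := hs
    apply hf0 N
    have h1 : fs N * (1 - (seq N).1) = fs N := by
      rw [mul_sub, mul_one, hfe N, sub_zero]
    have h2 : fs N * (1 - (seq (N + 1)).1) = 0 := by
      rw [hstepeq N, mul_sub, mul_one, mul_add, hfe N, hff N, zero_add, sub_self]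
    calc fs N = fs N * (1 - (seq N).1) := h1.symm
      _ = fs N * ((1 - (seq (N + 1)).1) * s) := by rw [← hs']
      _ = (fs N * (1 - (seq (N + 1)).1)) * s := by rw [mul_assoc]
      _ = 0 := by rw [h2, zero_mul]
  obtain ⟨n, hn⟩ := hterm
  have h1W : (1 : A) ∈ W := by
    have : (seq n).1 = 1 := by
      have := sub_eq_zero.1 hn; exact this.symm
    rw [← this]; exact (seq n).2.2
  have hWtop : W = ⊤ := by
    rw [Submodule.eq_top_iff']
    intro x
    have := W.smul_mem x h1W
    rwa [smul_eq_mul, mul_one] at this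
  exact IsSemisimpleModule.of_sSup_simples_eq_top hWtop

end Semisimple

section Transfer

/-- `PerfElem` passes to quotients (surjective images). -/
lemma aux_perfElem_of_surjective {A B : Type*} [Ring A] [Ring B]
    (f : A →+* B) (hf : Function.Surjective f) (hP : PerfElem A) : PerfElem B := by
  classical
  intro g hg
  let step : {q : ℕ × A // f q.2 = g q.1} → {q : ℕ × A // f q.2 = g q.1} := fun x =>
    let s := Classical.choose (hg x.1.1)
    let s' := Classical.choose (hf s)
    ⟨(x.1.1 + 1, x.1.2 * s'), by
      rw [map_mul, x.2, Classical.choose_spec (hf s)]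
      exact (Classical.choose_spec (hg x.1.1)).symm⟩
  obtain ⟨a0, ha0⟩ := hf (g 0)
  let seq : ℕ → {q : ℕ × A // f q.2 = g q.1} := fun n => step^[n] ⟨(0, a0), ha0⟩
  have hseqsucc : ∀ n, seq (n + 1) = step (seq n) := fun n =>
    Function.iterate_succ_apply' step n _
  have hidx : ∀ n, (seq n).1.1 = n := by
    intro n
    induction n with
    | zero => rfl
    | succ k ih => rw [hseqsucc k]; show (seq k).1.1 + 1 = k + 1; rw [ih]
  have hlift : ∀ n, f (seq n).1.2 = g n := by
    intro n
    have h := (seq n).2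
    rwa [hidx n] at h
  obtain ⟨N, hN⟩ := hP (fun n => (seq n).1.2) (fun n => by
    show ∃ s, (seq (n + 1)).1.2 = (seq n).1.2 * s
    rw [hseqsucc n]
    exact ⟨_, rfl⟩)
  refine ⟨N, fun n hn => ?_⟩
  obtain ⟨s, hs⟩ := hN n hn
  have hs' : (seq N).1.2 = (seq n).1.2 * s := hs
  exact ⟨f s, by rw [← hlift N, ← hlift n, ← map_mul, hs']⟩

end Transfer

section Main

variable {S : Type u} [Ring S]

theorem aux_main (hN : IsNoetherianRing S) (hP : PerfElem S) : IsArtinianRing S := by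
  classical
  haveI := hN
  set J : Ideal S := Ideal.jacobson (⊥ : Ideal S) with hJdef
  -- J is two-sided
  have hmulright : ∀ {x y : S}, x ∈ J → x * y ∈ J := by
    intro x y hx
    rw [aux_mem_jac_iff'] at hx ⊢
    intro z
    have := hx (y * z)
    rwa [← mul_assoc] at this
  haveI : J.IsTwoSided := ⟨fun _ hx => hmulright hx⟩
  set T2 : TwoSidedIdeal S := J.toTwoSided with hT2
  have hmemT2 : ∀ x : S, x ∈ T2 ↔ x ∈ J := fun x => Ideal.mem_toTwoSided
  set c : RingCon S := T2.ringCon with hc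
  set Q := c.Quotient with hQ
  set π : S →+* Q := c.mk' with hπ
  have hsurj : Function.Surjective π := fun q => Quotient.inductionOn' q fun s => ⟨s, rfl⟩
  have hkerS : ∀ x y : S, π x = π y ↔ x - y ∈ J := by
    intro x y
    rw [← hmemT2, ← TwoSidedIdeal.rel_iff]
    exact c.eq
  have hker : ∀ x : S, π x = 0 ↔ x ∈ J := by
    intro x
    have : (0 : Q) = π 0 := (map_zero π).symm
    rw [this, hkerS, sub_zero]
  -- units lift along π
  have hliftUnit : ∀ s : S, IsUnit (π s) → IsUnit s := by
    intro s hs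
    obtain ⟨u, hu⟩ := hs
    obtain ⟨b, hb⟩ := hsurj ↑u⁻¹
    have hsb : IsUnit (s * b) := by
      have h1 : π (s * b) = 1 := by rw [map_mul, ← hu, hb, u.mul_inv]
      have h2 : π (s * b) = π 1 := by rw [h1, map_one]
      have h3 : s * b - 1 ∈ J := (hkerS _ _).1 h2
      have h4 : IsUnit ((s * b - 1) * 1 + 1) := aux_mem_jac_iff'.1 h3 1
      rwa [mul_one, sub_add_cancel] at h4
    have hbs : IsUnit (b * s) := by
      have h1 : π (b * s) = 1 := by rw [map_mul, hb, ← hu, u.inv_mul]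
      have h2 : π (b * s) = π 1 := by rw [h1, map_one]
      have h3 : b * s - 1 ∈ J := (hkerS _ _).1 h2
      have h4 : IsUnit ((b * s - 1) * 1 + 1) := aux_mem_jac_iff'.1 h3 1
      rwa [mul_one, sub_add_cancel] at h4
    obtain ⟨v, hv⟩ := hsb
    obtain ⟨w, hw⟩ := hbs
    have hr : s * (b * ↑v⁻¹) = 1 := by rw [← mul_assoc, ← hv]; exact v.mul_inv
    have hl : (↑w⁻¹ * b) * s = 1 := by rw [mul_assoc, ← hw]; exact w.inv_mul
    have heq : ↑w⁻¹ * b = b * ↑v⁻¹ := by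
      calc ↑w⁻¹ * b = (↑w⁻¹ * b) * (s * (b * ↑v⁻¹)) := by rw [hr, mul_one]
        _ = ((↑w⁻¹ * b) * s) * (b * ↑v⁻¹) := by noncomm_ring
        _ = b * ↑v⁻¹ := by rw [hl, one_mul]
    exact ⟨⟨s, b * ↑v⁻¹, hr, by rw [← heq]; exact hl⟩, rfl⟩
  -- Q is semiprimitive
  have hJQ : ∀ x : Q, x ∈ Ideal.jacobson (⊥ : Ideal Q) → x = 0 := by
    intro x hx
    obtain ⟨a, rfl⟩ := hsurj x
    rw [hker]
    rw [aux_mem_jac_iff']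
    intro y
    rw [aux_mem_jac_iff'] at hx
    have := hx (π y)
    apply hliftUnit
    rwa [map_add, map_mul, map_one]
  have hPQ : PerfElem Q := aux_perfElem_of_surjective π hsurj hP
  haveI hssQ : IsSemisimpleRing Q := aux_semisimple hPQ hJQ
  -- semisimplicity of S-modules killed by J
  have killed_semisimple : ∀ (M : Type u) [AddCommGroup M] [Module S M],
      (∀ j ∈ J, ∀ m : M, j • m = 0) → IsSemisimpleModule S M := by
    intro M _ _ hkill
    letI smulQ : SMul Q M := ⟨fun x m => Quotient.liftOn' x (fun s => s • m)
      (fun s t hst => by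
        have h1 : π s = π t := Quotient.sound' hst
        have h2 : s - t ∈ J := (hkerS s t).1 h1
        have h3 : (s - t) • m = 0 := hkill _ h2 m
        rw [sub_smul, sub_eq_zero] at h3
        exact h3)⟩
    have hpismul : ∀ (s : S) (m : M), (π s) • m = s • m := fun s m => rfl
    letI modQ : Module Q M :=
      { one_smul := fun m => by
          rw [show (1 : Q) = π 1 from (map_one π).symm, hpismul]
          exact one_smul S m
        mul_smul := fun x y m => by
          obtain ⟨s, rfl⟩ := hsurj x
          obtain ⟨t, rfl⟩ := hsurj y
          rw [← map_mul, hpismul, hpismul, hpismul]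
          exact mul_smul s t m
        smul_zero := fun x => by
          obtain ⟨s, rfl⟩ := hsurj x
          rw [hpismul]
          exact smul_zero s
        smul_add := fun x m n => by
          obtain ⟨s, rfl⟩ := hsurj x
          rw [hpismul, hpismul, hpismul]
          exact smul_add s m n
        add_smul := fun x y m => by
          obtain ⟨s, rfl⟩ := hsurj x
          obtain ⟨t, rfl⟩ := hsurj y
          rw [← map_add, hpismul, hpismul, hpismul]
          exact add_smul s t m
        zero_smul := fun m => by
          rw [show (0 : Q) = π 0 from (map_zero π).symm, hpismul]
          exact zero_smul S m }
    haveI : IsSemisimpleModule Q M := inferInstance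
    let eIso : Submodule Q M ≃o Submodule S M :=
      { toFun := fun q =>
          { carrier := q
            add_mem' := fun h1 h2 => q.add_mem h1 h2
            zero_mem' := q.zero_mem
            smul_mem' := fun s {m} hm => q.smul_mem (π s) hm }
        invFun := fun p =>
          { carrier := p
            add_mem' := fun h1 h2 => p.add_mem h1 h2
            zero_mem' := p.zero_mem
            smul_mem' := fun x {m} hm => by
              obtain ⟨s, rfl⟩ := hsurj x
              exact p.smul_mem s hm }
        left_inv := fun q => SetLike.coe_injective rfl
        right_inv := fun p => SetLike.coe_injective rfl
        map_rel_iff' := Iff.rfl }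
    exact { toComplementedLattice := eIso.complementedLattice }
  -- nilpotence of J
  obtain ⟨m, hm⟩ := aux_nilpotent hP
  -- the filtration by powers of J
  set Nk : ℕ → Submodule S S := fun k => (fun N => J • N)^[k] ⊤ with hNk
  have hNksucc : ∀ k, Nk (k + 1) = J • Nk k := fun k =>
    Function.iterate_succ_apply' _ k _
  have hNkbot : Nk m = ⊥ := by
    have claim : ∀ k j, j + k = m → ∀ y ∈ Nk k, ∀ l : List S,
        (∀ x ∈ l, x ∈ J) → l.length = j → l.prod * y = 0 := by
      intro k
      induction k with
      | zero =>
        intro j hj y _ l hl hlen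
        rw [hm l hl (by omega), zero_mul]
      | succ k ih =>
        intro j hj y hy l hl hlen
        rw [hNksucc k] at hy
        refine Submodule.smul_induction_on hy ?_ ?_
        · intro r hr n hn
          have : l.prod * (r • n) = (l ++ [r]).prod * n := by
            rw [List.prod_append, List.prod_singleton, smul_eq_mul, mul_assoc]
          rw [this]
          refine ih (j + 1) (by omega) n hn (l ++ [r]) ?_ (by simp [hlen])
          intro x hx
          rcases List.mem_append.1 hx with h | h
          · exact hl x h
          · rw [List.mem_singleton.1 h]; exact hr
        · intro a b ha hb
          rw [mul_add, ha, hb, add_zero]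
    rw [eq_bot_iff]
    intro y hy
    have := claim m 0 (by omega) y hy [] (by simp) rfl
    rw [List.prod_nil, one_mul] at this
    exact (Submodule.mem_bot S).2 this
  -- downward induction: each quotient is artinian
  have hart : ∀ k, IsArtinian S (S ⧸ Nk k) := by
    intro k
    induction k with
    | zero =>
      haveI : Subsingleton (S ⧸ Nk 0) := by
        rw [Submodule.Quotient.subsingleton_iff]
        simp [hNk]
      infer_instance
    | succ k ih =>
      set P := S ⧸ Nk (k + 1) with hPdef
      set S₀ : Submodule S P := (Nk k).map (Nk (k + 1)).mkQ with hS₀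
      have hle : Nk (k + 1) ≤ Nk k := by
        rw [hNksucc k]; exact Submodule.smul_le_right
      haveI hartS₀ : IsArtinian S S₀ := by
        haveI : IsSemisimpleModule S S₀ := by
          apply killed_semisimple
          intro j hj x
          have hx : (x : P) ∈ (Nk k).map (Nk (k + 1)).mkQ := x.2
          obtain ⟨y, hy, hyx⟩ := Submodule.mem_map.1 hx
          have hcoe : ((j • x : S₀) : P) = 0 := by
            rw [Submodule.coe_smul]
            rw [← hyx, ← map_smul]
            rw [Submodule.mkQ_apply, Submodule.Quotient.mk_eq_zero]
            rw [hNksucc k]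
            exact Submodule.smul_mem_smul hj hy
          exact ZeroMemClass.coe_eq_zero.1 hcoe
        haveI : Module.Finite S S₀ := by
          haveI : IsNoetherian S P := inferInstance
          haveI : IsNoetherian S S₀ := inferInstance
          infer_instance
        infer_instance
      have hartQuot : IsArtinian S (P ⧸ S₀) := by
        have e := Submodule.quotientQuotientEquivQuotient (Nk (k + 1)) (Nk k) hle
        exact isArtinian_of_linearEquiv e.symm
      exact (isArtinian_iff_submodule_quotient S₀).2 ⟨hartS₀, hartQuot⟩
  have := hart m
  rw [hNkbot] at this
  exact isArtinian_of_linearEquiv (Submodule.quotEquivOfEqBot (⊥ : Submodule S S) rfl)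

end Main

/-- Every right noetherian right perfect ring is right artinian. -/
theorem stmt9 {R : Type u} [Ring R] (h1 : IsNoetherianRing Rᵐᵒᵖ)
    (h2 : IsRightPerfectRing R) : IsArtinianRing Rᵐᵒᵖ := by
  apply aux_main h1
  intro g hg
  set f : ℕ → R := fun n => (g n).unop with hf
  have hchain : ∀ n, Ideal.span {f (n + 1)} ≤ Ideal.span {f n} := by
    intro n
    obtain ⟨s, hs⟩ := hg n
    rw [Ideal.span_le, Set.singleton_subset_iff]
    have heq : f (n + 1) = s.unop * f n := by
      show (g (n + 1)).unop = s.unop * (g n).unop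
      rw [hs, MulOpposite.unop_mul]
    rw [SetLike.mem_coe, heq]
    exact Ideal.mul_mem_left _ _ (Ideal.subset_span (Set.mem_singleton _))
  obtain ⟨N, hsp⟩ := h2 f hchain
  refine ⟨N, fun n hn => ?_⟩
  have hfN : f N ∈ Ideal.span {f n} := by
    rw [hsp n hn]
    exact Ideal.subset_span (Set.mem_singleton _)
  obtain ⟨r, hr⟩ := Submodule.mem_span_singleton.1 hfN
  refine ⟨MulOpposite.op r, MulOpposite.unop_injective ?_⟩
  rw [MulOpposite.unop_mul, MulOpposite.unop_op]
  show (g N).unop = r * (g n).unop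
  rw [← smul_eq_mul]
  exact hr.symm
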